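/- Let X^(ε) be a perturbed Markov chain on finite state space S, and let C ⊂ S be such that there are no asymptotic dynamical traps with respect to C, i.e., for every y ∈ S there exist M ∈ ℕ and δ > 0 with liminf_{ε→0} P^y_ε(τ_C < M) ≥ δ. Let P̄_ε = (p_ε(x,y))_{x,y ∈ C^c} be the restriction of the transition matrix to C^c. Then limsup_{ε→0} κ(I − P̄_ε) < ∞, where κ denotes the condition number with respect to the supremum norm. -/

import Mathlib

open MeasureTheory Filter Set Topology
open scoped ENNReal

/-- A discrete-time Markov chain: a transition matrix `p` together with the family
of path measures `P x` (chain started at `x`), characterized on cylinder sets. -/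
structure MC (S : Type*) [MeasurableSpace S] where
  p : S → S → ℝ≥0∞
  rowSum : ∀ x, ∑' y, p x y = 1
  P : S → Measure (ℕ → S)
  prob : ∀ x, IsProbabilityMeasure (P x)
  start : ∀ x, P x {ω | ω 0 = x} = 1
  cyl : ∀ (γ : ℕ → S) (n : ℕ),
    P (γ 0) {ω | ∀ i ≤ n + 1, ω i = γ i}
      = P (γ 0) {ω | ∀ i ≤ n, ω i = γ i} * p (γ n) (γ (n + 1))

variable {S : Type*} [MeasurableSpace S]

/-- Return time `τ⁺_A = inf {n > 0 : X_n ∈ A}`, with value `⊤` if the set is never hit. -/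
noncomputable def tauP (A : Set S) (ω : ℕ → S) : ℕ∞ :=
  sInf ((fun k : ℕ => (k : ℕ∞)) '' {k | 0 < k ∧ ω k ∈ A})

/-- Hitting time `τ_A = inf {n ≥ 0 : X_n ∈ A}`. -/
noncomputable def tau (A : Set S) (ω : ℕ → S) : ℕ∞ :=
  sInf ((fun k : ℕ => (k : ℕ∞)) '' {k | ω k ∈ A})

/-- The event `X_{τ⁺_A} = y`. -/
def hitAtP (A : Set S) (y : S) : Set (ℕ → S) :=
  {ω | ∃ k : ℕ, tauP A ω = (k : ℕ∞) ∧ ω k = y}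

/-- The event `X_{τ_A} = y`. -/
def hitAt (A : Set S) (y : S) : Set (ℕ → S) :=
  {ω | ∃ k : ℕ, tau A ω = (k : ℕ∞) ∧ ω k = y}

def MCIrreducible (M : MC S) : Prop := ∀ x y : S, ∃ n : ℕ, 0 < M.P x {ω | ω n = y}

def MCRecurrent (M : MC S) : Prop := ∀ x : S, M.P x {ω | tauP {x} ω ≠ ⊤} = 1

/-- `E^z[τ⁺_x]`, the expected return time to `x` starting from `z`. -/
noncomputable def retExp (M : MC S) (z x : S) : ℝ≥0∞ :=
  ∫⁻ ω, ((tauP {x} ω : ℕ∞) : ℝ≥0∞) ∂ M.P z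

def MCPositiveRecurrent (M : MC S) : Prop := ∀ x : S, retExp M x x < ⊤

def MCStationary (M : MC S) (μ : S → ℝ≥0∞) : Prop :=
  (∑' x, μ x = 1) ∧ ∀ y, ∑' x, μ x * M.p x y = μ y

/-- Asymptotic equivalence of `ℝ≥0∞`-valued functions of `ε` as `ε → 0⁺`:
either both vanish identically on `(0,∞)`, or the second is eventually positive
and the ratio tends to `1`. -/
def AsymEqE (a b : ℝ → ℝ≥0∞) : Prop :=
  ((∀ ε > (0 : ℝ), a ε = 0) ∧ (∀ ε > (0 : ℝ), b ε = 0)) ∨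
  ((∃ ε₀ > (0 : ℝ), ∀ ε : ℝ, 0 < ε → ε < ε₀ → 0 < b ε) ∧
    Tendsto (fun ε => a ε / b ε) (nhdsWithin 0 (Set.Ioi 0)) (nhds 1))

/-- A perturbed Markov chain: transition probabilities converge as `ε → 0⁺`. -/
def Perturbed (X : ℝ → MC S) : Prop :=
  ∀ x y : S, Tendsto (fun ε => (X ε).p x y) (nhdsWithin 0 (Set.Ioi 0)) (nhds ((X 0).p x y))

/-- An irreducibly perturbed Markov chain. -/
def IrreduciblyPerturbed (X : ℝ → MC S) : Prop :=
  Perturbed X ∧ ∀ ε > (0 : ℝ), MCIrreducible (X ε)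

/-- `y` is accessible from `x`. -/
def Accessible (M : MC S) (x y : S) : Prop := ∃ n : ℕ, 0 < M.P x {ω | ω n = y}

/-- `E` is an essential communicating class of `M`. -/
def EssentialClass (M : MC S) (E : Set S) : Prop :=
  ∃ x ∈ E, (∀ y, Accessible M x y → Accessible M y x) ∧
    E = {y | Accessible M x y ∧ Accessible M y x}

/-- `z` is a transient state of `M`. -/
def TransientState (M : MC S) (z : S) : Prop :=
  ∃ y, Accessible M z y ∧ ¬ Accessible M y z

/-- `ν` is the (strictly positive) stationary distribution of the restriction of `M`
to the essential class `E`, trivially extended by `0` outside `E`. -/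
def RestrictedStationary (M : MC S) (E : Set S) (ν : S → ℝ≥0∞) : Prop :=
  (∀ x ∉ E, ν x = 0) ∧ (∀ x ∈ E, 0 < ν x) ∧ (∀ x, ν x < ⊤) ∧
  (∑' x : E, ν x = 1) ∧ ∀ y ∈ E, ∑' x : E, ν x * M.p x y = ν y

/-- The operator norm of a real matrix induced by the supremum norm. -/
noncomputable def supOpNorm {ι : Type*} [Fintype ι] (A : Matrix ι ι ℝ) : ℝ :=
  ⨆ i, ∑ j, |A i j|

/-- The condition number with respect to the supremum norm. -/
noncomputable def condNum {ι : Type*} [Fintype ι] [DecidableEq ι]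
    (A : Matrix ι ι ℝ) : ℝ :=
  supOpNorm A * supOpNorm A⁻¹


/- ======================= auxiliary development ======================= -/
section Aux
set_option linter.unusedSectionVars false

/-- coordinate-1 swap map -/
def swapMap (z z' : S) [DecidableEq S] : (ℕ → S) → (ℕ → S) :=
  fun ω i => if i = 1 then Equiv.swap z z' (ω 1) else ω i

lemma swap_preimage_eq [DecidableEq S] {z z' : S}
    (hind : ∀ B : Set S, MeasurableSet B → (z ∈ B ↔ z' ∈ B))
    (B : Set S) (mB : MeasurableSet B) :
    (Equiv.swap z z') ⁻¹' B = B := by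
  ext w
  simp only [Set.mem_preimage]
  rcases eq_or_ne w z with rfl | hwz
  · rw [Equiv.swap_apply_left]; exact (hind B mB).symm
  rcases eq_or_ne w z' with rfl | hwz'
  · rw [Equiv.swap_apply_right]; exact hind B mB
  · rw [Equiv.swap_apply_of_ne_of_ne hwz hwz']

lemma swapMap_invariant [DecidableEq S] {z z' : S}
    (hind : ∀ B : Set S, MeasurableSet B → (z ∈ B ↔ z' ∈ B))
    (T : Set (ℕ → S)) (hT : MeasurableSet T) :
    swapMap z z' ⁻¹' T = T := by
  let m : MeasurableSpace (ℕ → S) :=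
    { MeasurableSet' := fun T => swapMap z z' ⁻¹' T = T
      measurableSet_empty := by simp
      measurableSet_compl := fun s hs => by
        show swapMap z z' ⁻¹' sᶜ = sᶜ
        rw [Set.preimage_compl]
        exact congrArg compl hs
      measurableSet_iUnion := fun f hf => by
        show swapMap z z' ⁻¹' (⋃ i, f i) = ⋃ i, f i
        rw [Set.preimage_iUnion]
        exact iUnion_congr hf }
  have hle : (MeasurableSpace.pi : MeasurableSpace (ℕ → S)) ≤ m := by
    rw [MeasurableSpace.pi]
    refine iSup_le fun i => ?_
    intro s hs
    obtain ⟨B, mB, rfl⟩ := hs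
    show swapMap z z' ⁻¹' ((fun ω : ℕ → S => ω i) ⁻¹' B) = _
    rcases eq_or_ne i 1 with rfl | hi
    · ext ω
      simp only [Set.mem_preimage, swapMap, if_pos trivial, if_true]
      have h1 := Set.ext_iff.mp (swap_preimage_eq hind B mB) (ω 1)
      simpa [Set.mem_preimage] using h1
    · ext ω
      simp [swapMap, hi]
  exact hle T hT

namespace MCaux
/-- `z` is separated from every other point by a measurable set. -/
def Good (z : S) : Prop := ∀ z' ≠ z, ∃ B : Set S, MeasurableSet B ∧ z ∈ B ∧ z' ∉ B

lemma good_singleton [Fintype S] [DecidableEq S] {z : S} (h : Good z) :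
    MeasurableSet ({z} : Set S) := by
  choose B hB hz hz' using h
  classical
  have : ({z} : Set S) = ⋂ (w : S) (hw : w ≠ z), B w hw := by
    ext u
    simp only [Set.mem_singleton_iff, Set.mem_iInter]
    constructor
    · rintro rfl w hw; exact hz w hw
    · intro hu
      by_contra hne
      exact hz' u hne (hu u hne)
  rw [this]
  exact MeasurableSet.iInter fun w => MeasurableSet.iInter fun hw => hB w hw

lemma not_good_iff {z : S} : ¬ Good z ↔ ∃ z' ≠ z, ∀ B : Set S, MeasurableSet B → (z ∈ B ↔ z' ∈ B) := by
  constructor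
  · intro h
    rw [Good] at h; push_neg at h
    obtain ⟨z', hne, hB⟩ := h
    refine ⟨z', hne, fun B mB => ⟨fun hz => hB B mB hz, fun hz' => ?_⟩⟩
    by_contra hz
    have := hB Bᶜ mB.compl hz
    exact this hz'
  · rintro ⟨z', hne, hB⟩ hg
    obtain ⟨B, mB, hz, hz'⟩ := hg z' hne
    exact hz' ((hB B mB).1 hz)


end MCaux
open MCaux
section FinAux
variable [Fintype S] [DecidableEq S]


lemma p_le_one' (M : MC S) (x y : S) : M.p x y ≤ 1 := by
  have := ENNReal.le_tsum (f := M.p x) y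
  rw [M.rowSum x] at this; exact this

lemma stepMeas (M : MC S) (x w : S) :
    M.P x {ω | ω 0 = x ∧ ω 1 = w} = M.p x w := by
  set γ : ℕ → S := fun i => if i = 0 then x else w with hγ
  have h0 : γ 0 = x := rfl
  have h1 : γ 1 = w := rfl
  have hset : {ω : ℕ → S | ∀ i ≤ 1, ω i = γ i} = {ω | ω 0 = x ∧ ω 1 = w} := by
    ext ω
    constructor
    · intro h; exact ⟨h 0 (by norm_num), h 1 le_rfl⟩
    · rintro ⟨ha, hb⟩ i hi
      interval_cases i
      · exact ha
      · exact hb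
  have hset0 : {ω : ℕ → S | ∀ i ≤ 0, ω i = γ i} = {ω | ω 0 = x} := by
    ext ω; simp [Nat.le_zero, h0]
  have hc := M.cyl γ 0
  rw [show (0:ℕ)+1 = 1 from rfl] at hc
  rw [hset, hset0, h0, h1] at hc
  rw [M.start x, one_mul] at hc
  exact hc

lemma p_bad_core (M : MC S) (x z z' : S) (hne : z ≠ z')
    (hind : ∀ B : Set S, MeasurableSet B → (z ∈ B ↔ z' ∈ B)) :
    M.p x z' = 0 := by
  classical
  set μ := M.P x
  have hprob : IsProbabilityMeasure μ := M.prob x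
  set E : S → Set (ℕ → S) := fun w => {ω | ω 0 = x ∧ ω 1 = w} with hE
  have hEmeas : ∀ w, μ (E w) = M.p x w := fun w => stepMeas M x w
  set H := toMeasurable μ (E z) with hH
  have hHmeas : MeasurableSet H := measurableSet_toMeasurable μ (E z)
  have hHsub : E z ⊆ H := subset_toMeasurable μ (E z)
  have hHμ : μ H = M.p x z := by rw [measure_toMeasurable, hEmeas]
  have hEz' : E z' ⊆ H := by
    intro ω hω
    have : swapMap z z' ω ∈ E z := by
      constructor
      · show (if (0:ℕ) = 1 then _ else ω 0) = x
        simpa using hω.1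
      · show (if (1:ℕ) = 1 then Equiv.swap z z' (ω 1) else ω 1) = z
        simp [hω.2]
    have hinv := swapMap_invariant hind H hHmeas
    have : ω ∈ swapMap z z' ⁻¹' H := Set.mem_preimage.mpr (hHsub this)
    rwa [hinv] at this
  set F : Finset S := (Finset.univ.erase z).erase z' with hF
  have hcover : {ω : ℕ → S | ω 0 = x} ⊆ H ∪ ⋃ w ∈ F, E w := by
    intro ω hω
    rcases eq_or_ne (ω 1) z with h1 | h1
    · exact Or.inl (hHsub ⟨hω, h1⟩)
    rcases eq_or_ne (ω 1) z' with h2 | h2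
    · exact Or.inl (hEz' ⟨hω, h2⟩)
    · refine Or.inr ?_
      refine Set.mem_biUnion ?_ (⟨hω, rfl⟩ : ω ∈ E (ω 1))
      show ω 1 ∈ F
      rw [hF]
      exact Finset.mem_erase.mpr ⟨h2, Finset.mem_erase.mpr ⟨h1, Finset.mem_univ _⟩⟩
  have hbound : (1 : ℝ≥0∞) ≤ M.p x z + ∑ w ∈ F, M.p x w := by
    calc (1:ℝ≥0∞) = μ {ω | ω 0 = x} := (M.start x).symm
    _ ≤ μ (H ∪ ⋃ w ∈ F, E w) := measure_mono hcover
    _ ≤ μ H + μ (⋃ w ∈ F, E w) := measure_union_le _ _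
    _ ≤ μ H + ∑ w ∈ F, μ (E w) := by
        gcongr
        exact measure_biUnion_finset_le F E
    _ = M.p x z + ∑ w ∈ F, M.p x w := by rw [hHμ]; simp only [hEmeas]
  have htot : M.p x z + M.p x z' + ∑ w ∈ F, M.p x w = 1 := by
    have : ∑ w, M.p x w = 1 := by rw [← tsum_fintype (L := SummationFilter.unconditional _), M.rowSum]
    rw [← this, hF]
    rw [← Finset.add_sum_erase _ _ (Finset.mem_univ z)]
    rw [← Finset.add_sum_erase _ _ (Finset.mem_erase.mpr ⟨Ne.symm hne, Finset.mem_univ z'⟩)]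
    ring
  have : (1:ℝ≥0∞) + M.p x z' ≤ 1 + 0 := by
    calc (1:ℝ≥0∞) + M.p x z' ≤ (M.p x z + ∑ w ∈ F, M.p x w) + M.p x z' := by gcongr
    _ = M.p x z + M.p x z' + ∑ w ∈ F, M.p x w := by ring
    _ = 1 := htot
    _ = 1 + 0 := by rw [add_zero]
  have := (ENNReal.add_le_add_iff_left (by norm_num : (1:ℝ≥0∞) ≠ ⊤)).mp this
  exact le_antisymm this (by positivity)

noncomputable def wt (M : MC S) (n : ℕ) (γ : ℕ → S) : ℝ≥0∞ :=
  ∏ i ∈ Finset.range n, M.p (γ i) (γ (i + 1))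

omit [Fintype S] [DecidableEq S] in
lemma cylMeasure (M : MC S) (γ : ℕ → S) (n : ℕ) :
    M.P (γ 0) {ω | ∀ i ≤ n, ω i = γ i} = wt M n γ := by
  induction n with
  | zero =>
      have hset : {ω : ℕ → S | ∀ i ≤ 0, ω i = γ i} = {ω | ω 0 = γ 0} := by
        ext ω; simp [Nat.le_zero]
      rw [hset, M.start (γ 0)]; simp [wt]
  | succ n ih =>
      rw [M.cyl γ n, ih, wt, wt, Finset.prod_range_succ]

def extPath (y : S) (n : ℕ) (g : Fin n → S) : ℕ → S :=
  fun i => if h : 1 ≤ i ∧ i ≤ n then g ⟨i - 1, by omega⟩ else y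

lemma extPath_zero (y : S) (n : ℕ) (g : Fin n → S) : extPath y n g 0 = y := by
  simp [extPath]

lemma extPath_succ (y : S) (n : ℕ) (g : Fin n → S) (j : ℕ) (hj : j < n) :
    extPath y n g (j + 1) = g ⟨j, hj⟩ := by
  simp only [extPath]
  rw [dif_pos ⟨by omega, by omega⟩]
  congr 1

lemma extPath_shift (y z : S) (n : ℕ) (g : Fin n → S) (i : ℕ) (hi : i ≤ n) :
    extPath y (n + 1) (Fin.cons z g) (i + 1) = extPath z n g i := by
  rcases Nat.eq_zero_or_pos i with rfl | hpos
  · rw [extPath_succ y (n+1) _ 0 (by omega), extPath_zero]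
    simp
  · obtain ⟨j, rfl⟩ := Nat.exists_eq_succ_of_ne_zero (by omega : i ≠ 0)
    have hj : j < n := by omega
    rw [extPath_succ y (n+1) _ (j+1) (by omega), extPath_succ z n g j hj]
    have hfin : (⟨j+1, by omega⟩ : Fin (n+1)) = Fin.succ ⟨j, hj⟩ := rfl
    rw [hfin, Fin.cons_succ]

lemma wt_cons (M : MC S) (y z : S) (n : ℕ) (g : Fin n → S) :
    wt M (n + 1) (extPath y (n + 1) (Fin.cons z g))
      = M.p y z * wt M n (extPath z n g) := by
  rw [wt, Finset.prod_range_succ']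
  have h0 : extPath y (n+1) (Fin.cons z g) 0 = y := extPath_zero _ _ _
  have h1 : extPath y (n+1) (Fin.cons z g) (0+1) = z := by
    rw [extPath_shift y z n g 0 (by omega), extPath_zero]
  rw [h0, h1, mul_comm]
  congr 1
  apply Finset.prod_congr rfl
  intro i hi
  rw [Finset.mem_range] at hi
  rw [extPath_shift y z n g i (by omega), extPath_shift y z n g (i+1) (by omega)]

noncomputable def uFn (M : MC S) (C : Finset S) : ℕ → S → ℝ≥0∞
  | 0, _ => 1
  | n+1, y => ∑ z ∈ Cᶜ, M.p y z * uFn M C n z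

lemma p_sum_one (M : MC S) (x : S) : ∑ y, M.p x y = 1 := by
  rw [← tsum_fintype (L := SummationFilter.unconditional _), M.rowSum]

lemma p_le_one'' (M : MC S) (x y : S) : M.p x y ≤ 1 := by
  have := ENNReal.le_tsum (f := M.p x) y
  rw [M.rowSum x] at this; exact this

lemma uFn_le_one (M : MC S) (C : Finset S) (n : ℕ) (y : S) : uFn M C n y ≤ 1 := by
  induction n generalizing y with
  | zero => exact le_rfl
  | succ n ih =>
      calc uFn M C (n+1) y = ∑ z ∈ Cᶜ, M.p y z * uFn M C n z := rfl
      _ ≤ ∑ z ∈ Cᶜ, M.p y z * 1 := by gcongr with z hz; exact ih z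
      _ ≤ ∑ z, M.p y z := by
          simp only [mul_one]
          exact Finset.sum_le_sum_of_subset (Finset.subset_univ _)
      _ = 1 := p_sum_one M y

lemma uFn_antitone (M : MC S) (C : Finset S) (n : ℕ) (y : S) :
    uFn M C (n + 1) y ≤ uFn M C n y := by
  induction n generalizing y with
  | zero => exact uFn_le_one M C 1 y
  | succ n ih =>
      calc uFn M C (n+2) y = ∑ z ∈ Cᶜ, M.p y z * uFn M C (n+1) z := rfl
      _ ≤ ∑ z ∈ Cᶜ, M.p y z * uFn M C n z := by gcongr with z hz; exact ih z
      _ = uFn M C (n+1) y := rfl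

lemma sum_wt (M : MC S) (n : ℕ) (y : S) :
    ∑ g : Fin n → S, wt M n (extPath y n g) = 1 := by
  induction n generalizing y with
  | zero =>
      have h : ∀ g : Fin 0 → S, wt M 0 (extPath y 0 g) = 1 := by
        intro g; simp [wt]
      rw [Finset.sum_congr rfl fun g _ => h g]
      simp
  | succ n ih =>
      rw [← Fintype.sum_equiv (Fin.consEquiv fun _ : Fin (n+1) => S)
        (fun q => wt M (n+1) (extPath y (n+1) ((Fin.consEquiv _) q)))
        (fun h => wt M (n+1) (extPath y (n+1) h)) (fun q => rfl)]
      rw [Fintype.sum_prod_type]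
      have : ∀ z : S, ∀ g : Fin n → S,
          wt M (n+1) (extPath y (n+1) ((Fin.consEquiv _) (z, g)))
            = M.p y z * wt M n (extPath z n g) := fun z g => wt_cons M y z n g
      calc ∑ z, ∑ g : Fin n → S, wt M (n+1) (extPath y (n+1) ((Fin.consEquiv _) (z, g)))
          = ∑ z, ∑ g : Fin n → S, M.p y z * wt M n (extPath z n g) := by
            apply Finset.sum_congr rfl; intro z _
            exact Finset.sum_congr rfl fun g _ => this z g
      _ = ∑ z, M.p y z * ∑ g : Fin n → S, wt M n (extPath z n g) := by
            simp [Finset.mul_sum]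
      _ = ∑ z, M.p y z := by
            apply Finset.sum_congr rfl; intro z _; rw [ih z, mul_one]
      _ = 1 := p_sum_one M y

open Classical in
lemma sum_wt_good (M : MC S) (C : Finset S) (n : ℕ) (y : S) :
    ∑ g : Fin n → S, (if ∀ i, g i ∉ C then wt M n (extPath y n g) else 0)
      = uFn M C n y := by
  induction n generalizing y with
  | zero =>
      have h : ∀ g : Fin 0 → S,
          (if ∀ i, g i ∉ C then wt M 0 (extPath y 0 g) else 0) = 1 := by
        intro g
        rw [if_pos (fun i => i.elim0)]
        simp [wt]
      rw [Finset.sum_congr rfl fun g _ => h g]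
      simp [uFn]
  | succ n ih =>
      rw [← Fintype.sum_equiv (Fin.consEquiv fun _ : Fin (n+1) => S)
        (fun q => if ∀ i, ((Fin.consEquiv fun _ : Fin (n+1) => S) q) i ∉ C then
            wt M (n+1) (extPath y (n+1) ((Fin.consEquiv _) q)) else 0)
        (fun h => if ∀ i, h i ∉ C then wt M (n+1) (extPath y (n+1) h) else 0)
        (fun q => rfl)]
      rw [Fintype.sum_prod_type]
      have key : ∀ z : S, ∑ g : Fin n → S,
          (if ∀ i, ((Fin.consEquiv fun _ : Fin (n+1) => S) (z, g)) i ∉ C then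
            wt M (n+1) (extPath y (n+1) ((Fin.consEquiv _) (z, g))) else 0)
          = if z ∈ Cᶜ then M.p y z * uFn M C n z else 0 := by
        intro z
        have hcons : ∀ g : Fin n → S,
            ((∀ i, (Fin.cons z g : Fin (n+1) → S) i ∉ C)
              ↔ (z ∉ C ∧ ∀ i, g i ∉ C)) := by
          intro g
          constructor
          · intro h
            refine ⟨by simpa using h 0, fun i => by simpa using h i.succ⟩
          · rintro ⟨hz, hg⟩ i
            induction i using Fin.cases with
            | zero => simpa using hz
            | succ j => simpa using hg j
        by_cases hz : z ∈ Cᶜ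
        · rw [if_pos hz]
          rw [Finset.mem_compl] at hz
          calc ∑ g : Fin n → S, _
              = ∑ g : Fin n → S, (if ∀ i, g i ∉ C then
                  M.p y z * wt M n (extPath z n g) else 0) := by
                apply Finset.sum_congr rfl
                intro g _
                rw [show ((Fin.consEquiv fun _ : Fin (n+1) => S) (z, g)) = Fin.cons z g from rfl]
                by_cases hg : ∀ i, g i ∉ C
                · rw [if_pos ((hcons g).mpr ⟨hz, hg⟩), if_pos hg, wt_cons]
                · rw [if_neg (fun h => hg ((hcons g).mp h).2), if_neg hg]
          _ = M.p y z * ∑ g : Fin n → S, (if ∀ i, g i ∉ C then wt M n (extPath z n g) else 0) := by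
                rw [Finset.mul_sum]
                apply Finset.sum_congr rfl
                intro g _
                by_cases hg : ∀ i, g i ∉ C <;> simp [hg]
          _ = M.p y z * uFn M C n z := by rw [ih z]
        · rw [if_neg hz]
          rw [Finset.mem_compl, not_not] at hz
          apply Finset.sum_eq_zero
          intro g _
          rw [show ((Fin.consEquiv fun _ : Fin (n+1) => S) (z, g)) = Fin.cons z g from rfl]
          rw [if_neg (fun h => ((hcons g).mp h).1 hz)]
      calc ∑ z, ∑ g : Fin n → S, _
          = ∑ z, if z ∈ Cᶜ then M.p y z * uFn M C n z else 0 :=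
            Finset.sum_congr rfl fun z _ => key z
      _ = ∑ z ∈ Cᶜ, M.p y z * uFn M C n z := by rw [Finset.sum_ite_mem, Finset.univ_inter]
      _ = uFn M C (n+1) y := rfl

omit [MeasurableSpace S] [Fintype S] [DecidableEq S] in
lemma tau_lt_iff (A : Set S) (ω : ℕ → S) (m : ℕ) :
    tau A ω < (m : ℕ∞) ↔ ∃ k < m, ω k ∈ A := by
  rw [tau, sInf_lt_iff]
  constructor
  · rintro ⟨b, ⟨k, hk, rfl⟩, hb⟩
    refine ⟨k, ?_, hk⟩
    have hb' : (k : ℕ∞) < (m : ℕ∞) := hb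
    exact_mod_cast hb'
  · rintro ⟨k, hk, hA⟩
    exact ⟨(k : ℕ∞), ⟨k, hA, rfl⟩, by exact_mod_cast hk⟩

open Classical in
lemma main_bound (M : MC S) (C : Finset S) (n : ℕ) (y : S)
    (hy : MeasurableSet ({y} : Set S)) (hyC : y ∉ C) :
    M.P y {ω | tau (↑C : Set S) ω < ((n : ℕ) + 1 : ℕ∞)} + uFn M C n y ≤ 1 := by
  have hprob : IsProbabilityMeasure (M.P y) := M.prob y
  -- the start event is measurable with measure 1, so its complement is null
  have hmeas0 : MeasurableSet {ω : ℕ → S | ω 0 = y} := by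
    have : {ω : ℕ → S | ω 0 = y} = (fun ω : ℕ → S => ω 0) ⁻¹' {y} := rfl
    rw [this]
    exact (measurable_pi_apply 0) hy
  have hcompl : M.P y {ω : ℕ → S | ω 0 = y}ᶜ = 0 := by
    have := measure_compl hmeas0 (measure_ne_top (M.P y) _)
    rw [M.start y, measure_univ] at this
    simpa using this
  set Bad : Finset (Fin n → S) := Finset.univ.filter (fun g => ¬ ∀ i, g i ∉ C) with hBad
  -- covering
  have hcover : {ω : ℕ → S | tau (↑C : Set S) ω < ((n : ℕ) + 1 : ℕ∞)}
      ⊆ {ω : ℕ → S | ω 0 = y}ᶜ ∪ ⋃ g ∈ Bad, {ω : ℕ → S | ∀ i ≤ n, ω i = extPath y n g i} := by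
    intro ω hω
    have : tau (↑C : Set S) ω < ((n + 1 : ℕ) : ℕ∞) := by
      simpa [Nat.cast_add, Nat.cast_one] using hω
    rw [tau_lt_iff] at this
    obtain ⟨k, hk, hkC⟩ := this
    rcases eq_or_ne (ω 0) y with h0 | h0
    swap
    · exact Or.inl h0
    refine Or.inr ?_
    set g : Fin n → S := fun i => ω (i + 1) with hg
    have hmem : ω ∈ {ω : ℕ → S | ∀ i ≤ n, ω i = extPath y n g i} := by
      intro i hi
      rcases Nat.eq_zero_or_pos i with rfl | hpos
      · rw [extPath_zero]; exact h0
      · obtain ⟨j, rfl⟩ := Nat.exists_eq_succ_of_ne_zero (by omega : i ≠ 0)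
        rw [extPath_succ y n g j (by omega)]
    have hbad : g ∈ Bad := by
      rw [hBad, Finset.mem_filter]
      refine ⟨Finset.mem_univ _, ?_⟩
      intro hall
      have hk0 : k ≠ 0 := by
        rintro rfl
        rw [h0] at hkC
        exact hyC (by exact_mod_cast hkC)
      obtain ⟨j, rfl⟩ := Nat.exists_eq_succ_of_ne_zero hk0
      exact hall ⟨j, by omega⟩ (by simpa [hg] using hkC)
    exact Set.mem_biUnion hbad hmem
  -- measure bound
  have hμ : M.P y {ω : ℕ → S | tau (↑C : Set S) ω < ((n : ℕ) + 1 : ℕ∞)}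
      ≤ ∑ g ∈ Bad, wt M n (extPath y n g) := by
    calc M.P y {ω : ℕ → S | tau (↑C : Set S) ω < ((n : ℕ) + 1 : ℕ∞)}
        ≤ M.P y ({ω : ℕ → S | ω 0 = y}ᶜ ∪ ⋃ g ∈ Bad, {ω : ℕ → S | ∀ i ≤ n, ω i = extPath y n g i}) :=
          measure_mono hcover
    _ ≤ M.P y {ω : ℕ → S | ω 0 = y}ᶜ
        + M.P y (⋃ g ∈ Bad, {ω : ℕ → S | ∀ i ≤ n, ω i = extPath y n g i}) := measure_union_le _ _
    _ ≤ 0 + ∑ g ∈ Bad, M.P y {ω : ℕ → S | ∀ i ≤ n, ω i = extPath y n g i} := by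
          rw [hcompl]
          gcongr
          exact measure_biUnion_finset_le Bad _
    _ = ∑ g ∈ Bad, wt M n (extPath y n g) := by
          rw [zero_add]
          apply Finset.sum_congr rfl
          intro g _
          have h0 : extPath y n g 0 = y := extPath_zero _ _ _
          have := cylMeasure M (extPath y n g) n
          rw [h0] at this
          exact this
  -- sum splitting
  have hsplit : ∑ g ∈ Bad, wt M n (extPath y n g) + uFn M C n y = 1 := by
    rw [← sum_wt_good M C n y, ← sum_wt M n y]
    rw [hBad]
    rw [Finset.sum_filter]
    rw [← Finset.sum_add_distrib]
    apply Finset.sum_congr rfl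
    intro g _
    by_cases hg : ∀ i, g i ∉ C <;> simp [hg]
  calc M.P y {ω : ℕ → S | tau (↑C : Set S) ω < ((n : ℕ) + 1 : ℕ∞)} + uFn M C n y
      ≤ ∑ g ∈ Bad, wt M n (extPath y n g) + uFn M C n y := by gcongr
  _ = 1 := hsplit

open MCaux in
lemma p_bad (M : MC S) (x z : S) (h : ¬ Good z) : M.p x z = 0 := by
  obtain ⟨z', hne, hind⟩ := not_good_iff.mp h
  exact p_bad_core M x z' z hne (fun B mB => (hind B mB).symm)

lemma uFn_ne_top (M : MC S) (C : Finset S) (n : ℕ) (y : S) : uFn M C n y ≠ ⊤ :=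
  ne_top_of_le_ne_top ENNReal.one_ne_top (uFn_le_one M C n y)


lemma p_ne_top' (M : MC S) (x y : S) : M.p x y ≠ ⊤ :=
  fun h => by simpa [h] using p_le_one'' M x y

lemma rowSum_pow (M : MC S) (C : Finset S) : ∀ (n : ℕ) (w : {s // s ∈ Cᶜ}),
    ∑ z, ((Matrix.of fun a b : {s // s ∈ Cᶜ} => (M.p (a : S) (b : S)).toReal) ^ n) w z
      = (uFn M C n (w : S)).toReal := by
  intro n
  induction n with
  | zero =>
      intro w
      simp only [pow_zero]
      have : ∀ z : {s // s ∈ Cᶜ}, (1 : Matrix {s // s ∈ Cᶜ} {s // s ∈ Cᶜ} ℝ) w z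
          = if w = z then 1 else 0 := fun z => Matrix.one_apply
      rw [Finset.sum_congr rfl fun z _ => this z]
      simp [uFn]
  | succ n ih =>
      intro w
      rw [pow_succ']
      calc ∑ z, ((Matrix.of fun a b : {s // s ∈ Cᶜ} => (M.p (a : S) (b : S)).toReal)
              * (Matrix.of fun a b : {s // s ∈ Cᶜ} => (M.p (a : S) (b : S)).toReal) ^ n) w z
          = ∑ z, ∑ v : {s // s ∈ Cᶜ}, (M.p (w : S) (v : S)).toReal
              * ((Matrix.of fun a b : {s // s ∈ Cᶜ} => (M.p (a : S) (b : S)).toReal) ^ n) v z := by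
            apply Finset.sum_congr rfl
            intro z _
            rw [Matrix.mul_apply]
            rfl
      _ = ∑ v : {s // s ∈ Cᶜ}, (M.p (w : S) (v : S)).toReal
              * ∑ z, ((Matrix.of fun a b : {s // s ∈ Cᶜ} => (M.p (a : S) (b : S)).toReal) ^ n) v z := by
            rw [Finset.sum_comm]
            apply Finset.sum_congr rfl
            intro v _
            rw [Finset.mul_sum]
      _ = ∑ v : {s // s ∈ Cᶜ}, (M.p (w : S) (v : S)).toReal * (uFn M C n (v : S)).toReal := by
            apply Finset.sum_congr rfl
            intro v _
            rw [ih v]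
      _ = ∑ v : {s // s ∈ Cᶜ}, ((M.p (w : S) (v : S)) * uFn M C n (v : S)).toReal := by
            apply Finset.sum_congr rfl
            intro v _
            rw [ENNReal.toReal_mul]
      _ = ∑ v ∈ Cᶜ, ((M.p (w : S) v) * uFn M C n v).toReal :=
            Finset.sum_coe_sort Cᶜ (fun v => ((M.p (w : S) v) * uFn M C n v).toReal)
      _ = (∑ v ∈ Cᶜ, (M.p (w : S) v) * uFn M C n v).toReal := by
            rw [ENNReal.toReal_sum]
            intro v _
            exact ENNReal.mul_ne_top (p_ne_top' M _ _) (uFn_ne_top M C n v)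
      _ = (uFn M C (n + 1) (w : S)).toReal := rfl

end FinAux
end Aux

open MCaux

namespace MatAux
variable {ι : Type*} [Fintype ι]

lemma son_nonneg (A : Matrix ι ι ℝ) : 0 ≤ supOpNorm A :=
  Real.iSup_nonneg fun i => Finset.sum_nonneg fun j _ => abs_nonneg _

lemma row_le_son (A : Matrix ι ι ℝ) (i : ι) : ∑ j, |A i j| ≤ supOpNorm A := by
  have : BddAbove (Set.range fun i => ∑ j, |A i j|) :=
    (Set.finite_range fun i => ∑ j, |A i j|).bddAbove
  exact le_ciSup this i

lemma son_le (A : Matrix ι ι ℝ) (c : ℝ) (hc : 0 ≤ c)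
    (h : ∀ i, ∑ j, |A i j| ≤ c) : supOpNorm A ≤ c :=
  Real.iSup_le h hc

lemma son_mul (A B : Matrix ι ι ℝ) : supOpNorm (A * B) ≤ supOpNorm A * supOpNorm B := by
  apply son_le _ _ (mul_nonneg (son_nonneg A) (son_nonneg B))
  intro i
  calc ∑ j, |(A * B) i j| = ∑ j, |∑ k, A i k * B k j| := by
        simp [Matrix.mul_apply]
  _ ≤ ∑ j, ∑ k, |A i k * B k j| := by
        gcongr with j hj
        exact Finset.abs_sum_le_sum_abs _ _
  _ = ∑ k, |A i k| * ∑ j, |B k j| := by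
        rw [Finset.sum_comm]
        apply Finset.sum_congr rfl
        intro k _
        rw [Finset.mul_sum]
        apply Finset.sum_congr rfl
        intro j _
        rw [abs_mul]
  _ ≤ ∑ k, |A i k| * supOpNorm B := by
        apply Finset.sum_le_sum
        intro k _
        exact mul_le_mul_of_nonneg_left (row_le_son B k) (abs_nonneg _)
  _ = (∑ k, |A i k|) * supOpNorm B := by rw [Finset.sum_mul]
  _ ≤ supOpNorm A * supOpNorm B := by
        gcongr
        · exact son_nonneg B
        · exact row_le_son A i

lemma son_one [DecidableEq ι] : supOpNorm (1 : Matrix ι ι ℝ) ≤ 1 := by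
  apply son_le _ _ zero_le_one
  intro i
  calc ∑ j, |(1 : Matrix ι ι ℝ) i j| = ∑ j, (1 : Matrix ι ι ℝ) i j := by
        apply Finset.sum_congr rfl
        intro j _
        apply abs_of_nonneg
        by_cases h : i = j <;> simp [Matrix.one_apply, h]
  _ = 1 := by simp [Matrix.one_apply]
  _ ≤ 1 := le_rfl

lemma son_add (A B : Matrix ι ι ℝ) : supOpNorm (A + B) ≤ supOpNorm A + supOpNorm B := by
  apply son_le _ _ (add_nonneg (son_nonneg A) (son_nonneg B))
  intro i
  calc ∑ j, |(A + B) i j| ≤ ∑ j, (|A i j| + |B i j|) := by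
        gcongr with j hj
        exact abs_add_le _ _
  _ = ∑ j, |A i j| + ∑ j, |B i j| := Finset.sum_add_distrib
  _ ≤ _ := add_le_add (row_le_son A i) (row_le_son B i)

lemma son_neg (A : Matrix ι ι ℝ) : supOpNorm (-A) = supOpNorm A := by
  unfold supOpNorm
  congr 1; funext i
  apply Finset.sum_congr rfl
  intro j _
  simp

lemma son_sum (m : ℕ) (f : ℕ → Matrix ι ι ℝ) (c : ℝ) (hc : 0 ≤ c)
    (h : ∀ k, supOpNorm (f k) ≤ c) :
    supOpNorm (∑ k ∈ Finset.range m, f k) ≤ m * c := by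
  induction m with
  | zero => simp [supOpNorm, Real.iSup_nonneg]
    -- sum over range 0 = 0 matrix; rows all 0
  | succ m ih =>
      rw [Finset.sum_range_succ]
      calc supOpNorm (∑ k ∈ Finset.range m, f k + f m)
          ≤ supOpNorm (∑ k ∈ Finset.range m, f k) + supOpNorm (f m) := son_add _ _
      _ ≤ m * c + c := add_le_add ih (h m)
      _ = (m + 1) * c := by ring
      _ = ((m + 1 : ℕ) : ℝ) * c := by push_cast; ring

lemma isUnit_one_sub (D : Matrix ι ι ℝ) [DecidableEq ι] (r : ℝ) (hr1 : r < 1)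
    (hD : ∀ i, ∑ j, |D i j| ≤ r) : IsUnit (1 - D) := by
  rw [Matrix.isUnit_iff_isUnit_det, isUnit_iff_ne_zero]
  intro hdet
  obtain ⟨v, hv0, hv⟩ := (Matrix.exists_mulVec_eq_zero_iff).mpr hdet
  rcases isEmpty_or_nonempty ι with hι | hι
  · exact hv0 (funext fun i => (hι.elim i))
  obtain ⟨i0, _, hmax⟩ := Finset.exists_max_image Finset.univ (fun i => |v i|) ⟨Classical.arbitrary ι, Finset.mem_univ _⟩
  have hvi : v i0 = D.mulVec v i0 := by
    have := congrFun hv i0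
    rw [Matrix.sub_mulVec, Matrix.one_mulVec] at this
    have : v i0 - D.mulVec v i0 = 0 := this
    linarith [this]
  have hb : |v i0| ≤ r * |v i0| := by
    nth_rewrite 1 [hvi]
    calc |D.mulVec v i0| = |∑ j, D i0 j * v j| := by rw [Matrix.mulVec, dotProduct]
    _ ≤ ∑ j, |D i0 j * v j| := Finset.abs_sum_le_sum_abs _ _
    _ = ∑ j, |D i0 j| * |v j| := by
        apply Finset.sum_congr rfl; intro j _; rw [abs_mul]
    _ ≤ ∑ j, |D i0 j| * |v i0| := by
        apply Finset.sum_le_sum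
        intro j _
        exact mul_le_mul_of_nonneg_left (hmax j (Finset.mem_univ j)) (abs_nonneg _)
    _ = (∑ j, |D i0 j|) * |v i0| := by rw [Finset.sum_mul]
    _ ≤ r * |v i0| := mul_le_mul_of_nonneg_right (hD i0) (abs_nonneg _)
  have hv0' : |v i0| ≤ 0 := by nlinarith [abs_nonneg (v i0)]
  have : ∀ j, v j = 0 := by
    intro j
    have := hmax j (Finset.mem_univ j)
    have : |v j| ≤ 0 := le_trans this hv0'
    exact abs_eq_zero.mp (le_antisymm this (abs_nonneg _))
  exact hv0 (funext this)

end MatAux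

namespace MatAux
variable {ι : Type*} [Fintype ι]

lemma pow_entries_nonneg (A : Matrix ι ι ℝ) [DecidableEq ι]
    (hA0 : ∀ i j, 0 ≤ A i j) (k : ℕ) : ∀ i j, 0 ≤ (A ^ k) i j := by
  induction k with
  | zero =>
      intro i j
      by_cases h : i = j <;> simp [Matrix.one_apply, h]
  | succ k ih =>
      intro i j
      rw [pow_succ, Matrix.mul_apply]
      exact Finset.sum_nonneg fun l _ => mul_nonneg (ih i l) (hA0 l j)

lemma son_of_rows (B : Matrix ι ι ℝ) (c : ℝ) (hc : 0 ≤ c)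
    (hB0 : ∀ i j, 0 ≤ B i j) (hB : ∀ i, ∑ j, B i j ≤ c) : supOpNorm B ≤ c := by
  apply son_le _ _ hc
  intro i
  calc ∑ j, |B i j| = ∑ j, B i j := by
        apply Finset.sum_congr rfl; intro j _; exact abs_of_nonneg (hB0 i j)
  _ ≤ c := hB i

lemma matrix_bound [DecidableEq ι] (A : Matrix ι ι ℝ) (m : ℕ) (r : ℝ)
    (hr0 : 0 ≤ r) (hr1 : r < 1)
    (hA0 : ∀ i j, 0 ≤ A i j) (hA1 : ∀ i, ∑ j, A i j ≤ 1)
    (hAm : ∀ i, ∑ j, (A ^ m) i j ≤ r) :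
    IsUnit (1 - A) ∧ condNum (1 - A) ≤ 2 * ((m : ℝ) * (1 - r)⁻¹) := by
  have hsonA : supOpNorm A ≤ 1 := son_of_rows A 1 zero_le_one hA0 hA1
  have hsonAk : ∀ k, supOpNorm (A ^ k) ≤ 1 := by
    intro k
    induction k with
    | zero => simpa using (son_one : supOpNorm (1 : Matrix ι ι ℝ) ≤ 1)
    | succ k ih =>
        rw [pow_succ]
        calc supOpNorm (A ^ k * A) ≤ supOpNorm (A ^ k) * supOpNorm A := son_mul _ _
        _ ≤ 1 * 1 := mul_le_mul ih hsonA (son_nonneg _) zero_le_one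
        _ = 1 := one_mul 1
  set D := A ^ m with hD
  have hDrow : ∀ i, ∑ j, |D i j| ≤ r := by
    intro i
    calc ∑ j, |D i j| = ∑ j, D i j := by
          apply Finset.sum_congr rfl
          intro j _
          exact abs_of_nonneg (pow_entries_nonneg A hA0 m i j)
    _ ≤ r := hAm i
  have hU : IsUnit (1 - D) := isUnit_one_sub D r hr1 hDrow
  set F := (1 - D)⁻¹ with hFdef
  have hFmul : (1 - D) * F = 1 :=
    Matrix.mul_nonsing_inv _ ((Matrix.isUnit_iff_isUnit_det _).mp hU)
  have hFeq : F = 1 + D * F := by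
    have h1 : F - D * F = 1 := by
      rw [show F - D * F = (1 - D) * F by rw [Matrix.sub_mul, Matrix.one_mul]]
      exact hFmul
    rw [← h1]
    abel
  have hsonD : supOpNorm D ≤ r := son_of_rows D r hr0 (pow_entries_nonneg A hA0 m) hAm
  have hsonF : supOpNorm F ≤ (1 - r)⁻¹ := by
    have h1 : supOpNorm F ≤ 1 + r * supOpNorm F := by
      calc supOpNorm F = supOpNorm (1 + D * F) := by rw [← hFeq]
      _ ≤ supOpNorm (1 : Matrix ι ι ℝ) + supOpNorm (D * F) := son_add _ _
      _ ≤ 1 + supOpNorm D * supOpNorm F := by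
            apply add_le_add son_one (son_mul _ _)
      _ ≤ 1 + r * supOpNorm F := by
            have := mul_le_mul_of_nonneg_right hsonD (son_nonneg F)
            linarith
    have hpos : 0 < 1 - r := by linarith
    rw [← one_div, le_div_iff₀ hpos]
    nlinarith [son_nonneg F]
  set Sc := ∑ k ∈ Finset.range m, A ^ k with hSc
  have hsonS : supOpNorm Sc ≤ (m : ℝ) := by
    have := son_sum m (fun k => A ^ k) 1 zero_le_one hsonAk
    simpa using this
  have hcomm : A * Sc = Sc * A := by
    rw [hSc, Finset.mul_sum, Finset.sum_mul]
    exact Finset.sum_congr rfl fun k _ => (pow_mul_comm' A k).symm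
  have hgeom : (1 - A) * Sc = 1 - D := by
    have h := geom_sum_mul A m
    have h2 : Sc * (1 - A) = 1 - A ^ m := by
      calc Sc * (1 - A) = -(Sc * (A - 1)) := by
            rw [Matrix.mul_sub, Matrix.mul_sub]
            simp
      _ = -(A ^ m - 1) := by rw [h]
      _ = 1 - A ^ m := neg_sub _ _
    calc (1 - A) * Sc = Sc - A * Sc := by rw [Matrix.sub_mul, Matrix.one_mul]
    _ = Sc - Sc * A := by rw [hcomm]
    _ = Sc * (1 - A) := by rw [Matrix.mul_sub, Matrix.mul_one]
    _ = 1 - A ^ m := h2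
  set E := Sc * F with hE
  have hmulE : (1 - A) * E = 1 := by
    rw [hE, ← Matrix.mul_assoc, hgeom, hFmul]
  have hUnit : IsUnit (1 - A) := by
    rw [Matrix.isUnit_iff_isUnit_det]
    exact IsUnit.of_mul_eq_one ((E).det) (by rw [← Matrix.det_mul, hmulE, Matrix.det_one])
  refine ⟨hUnit, ?_⟩
  have hinv : (1 - A)⁻¹ = E := Matrix.inv_eq_right_inv hmulE
  have hson1A : supOpNorm (1 - A) ≤ 2 := by
    calc supOpNorm (1 - A) = supOpNorm (1 + -A) := by rw [sub_eq_add_neg]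
    _ ≤ supOpNorm (1 : Matrix ι ι ℝ) + supOpNorm (-A) := son_add _ _
    _ = supOpNorm (1 : Matrix ι ι ℝ) + supOpNorm A := by rw [son_neg]
    _ ≤ 1 + 1 := add_le_add son_one hsonA
    _ = 2 := by norm_num
  have hsonE : supOpNorm E ≤ (m : ℝ) * (1 - r)⁻¹ := by
    calc supOpNorm E ≤ supOpNorm Sc * supOpNorm F := son_mul _ _
    _ ≤ (m : ℝ) * (1 - r)⁻¹ := by
        apply mul_le_mul hsonS hsonF (son_nonneg _) (Nat.cast_nonneg m)
  rw [condNum, hinv]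
  have h2 : (0:ℝ) ≤ (m : ℝ) * (1 - r)⁻¹ :=
    mul_nonneg (Nat.cast_nonneg m) (inv_nonneg.mpr (by linarith))
  calc supOpNorm (1 - A) * supOpNorm E ≤ 2 * ((m : ℝ) * (1 - r)⁻¹) := by
        apply mul_le_mul hson1A hsonE (son_nonneg _) (by norm_num)
  _ ≤ _ := le_rfl

end MatAux


/-- If there are no asymptotic dynamical traps with respect to `C`, then
`limsup_{ε→0} κ(I − P̄_ε) < ∞` for the restriction `P̄_ε` of the transition
matrix to `Cᶜ` (which is invertible for small `ε`). -/
theorem statement19 [Fintype S] [DecidableEq S] (X : ℝ → MC S) (hX : Perturbed X)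
    (C : Finset S)
    (hnotrap : ∀ y : S, ∃ M : ℕ, ∃ δ : ℝ≥0∞, 0 < δ ∧
      δ ≤ Filter.liminf (fun ε => (X ε).P y {ω | tau (↑C : Set S) ω < (M : ℕ∞)})
            (nhdsWithin 0 (Set.Ioi 0))) :
    ∃ K : ℝ, ∀ᶠ ε in nhdsWithin (0 : ℝ) (Set.Ioi 0),
      IsUnit (1 - Matrix.of fun w z : {s // s ∈ Cᶜ} => ((X ε).p (w : S) (z : S)).toReal) ∧
      condNum (1 - Matrix.of fun w z : {s // s ∈ Cᶜ} => ((X ε).p (w : S) (z : S)).toReal)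
        ≤ K := by
  classical
  rcases isEmpty_or_nonempty {s // s ∈ Cᶜ} with hι | hι
  · refine ⟨0, Filter.Eventually.of_forall fun ε => ⟨?_, ?_⟩⟩
    · rw [Matrix.isUnit_iff_isUnit_det, Matrix.det_isEmpty]; exact isUnit_one
    · unfold condNum supOpNorm
      rw [Real.iSup_of_isEmpty, zero_mul]
  · choose Mf δf hδ0 hδle using hnotrap
    have hSne : Nonempty S := ⟨(Classical.arbitrary {s // s ∈ Cᶜ}).val⟩
    have hUne : (Finset.univ : Finset S).Nonempty := Finset.univ_nonempty
    set m0 : ℝ≥0∞ := Finset.univ.inf' hUne (fun y => min (δf y) 1) with hm0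
    have hm0pos : 0 < m0 :=
      (Finset.lt_inf'_iff hUne).mpr fun y _ => lt_min (hδ0 y) zero_lt_one
    have hm0le1 : m0 ≤ 1 :=
      le_trans (Finset.inf'_le _ (Finset.mem_univ (Classical.arbitrary S))) (min_le_right _ _)
    have hm0top : m0 ≠ ⊤ := ne_top_of_le_ne_top ENNReal.one_ne_top hm0le1
    set c : ℝ≥0∞ := m0 / 2 with hc
    have hcm0 : c < m0 := ENNReal.half_lt_self hm0pos.ne' hm0top
    have hcpos : 0 < c := by
      rw [hc]
      exact ENNReal.half_pos hm0pos.ne'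
    have hclt : ∀ y : S, c < δf y := by
      intro y
      calc c < m0 := hcm0
      _ ≤ min (δf y) 1 := Finset.inf'_le _ (Finset.mem_univ y)
      _ ≤ δf y := min_le_left _ _
    set N : ℕ := Finset.univ.sup Mf with hN
    set r : ℝ := ((1 : ℝ≥0∞) - c).toReal with hr
    have hsubtop : (1 : ℝ≥0∞) - c ≠ ⊤ := ne_top_of_le_ne_top ENNReal.one_ne_top tsub_le_self
    have hr0 : 0 ≤ r := ENNReal.toReal_nonneg
    have hr1 : r < 1 := by
      have h1 : (1 : ℝ≥0∞) - c < 1 := ENNReal.sub_lt_self ENNReal.one_ne_top one_ne_zero hcpos.ne'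
      have := (ENNReal.toReal_lt_toReal hsubtop ENNReal.one_ne_top).mpr h1
      simpa using this
    refine ⟨2 * (((N + 1 : ℕ) : ℝ) * (1 - r)⁻¹), ?_⟩
    have hev : ∀ᶠ ε in nhdsWithin (0:ℝ) (Set.Ioi 0), ∀ y ∈ (Finset.univ : Finset S),
        c < (X ε).P y {ω | tau (↑C : Set S) ω < (Mf y : ℕ∞)} := by
      rw [Finset.eventually_all]
      intro y _
      exact Filter.eventually_lt_of_lt_liminf (lt_of_lt_of_le (hclt y) (hδle y))
    refine hev.mono ?_
    intro ε hε
    set A : Matrix {s // s ∈ Cᶜ} {s // s ∈ Cᶜ} ℝ :=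
      Matrix.of fun w z : {s // s ∈ Cᶜ} => ((X ε).p (w : S) (z : S)).toReal with hA
    have step1 : ∀ y : S, Good y → y ∉ C → uFn (X ε) C N y ≤ 1 - c := by
      intro y hg hyC
      have hmb := main_bound (X ε) C N y (good_singleton hg) hyC
      have hmono : (X ε).P y {ω | tau (↑C : Set S) ω < (Mf y : ℕ∞)}
          ≤ (X ε).P y {ω | tau (↑C : Set S) ω < ((N : ℕ) + 1 : ℕ∞)} := by
        apply measure_mono
        intro ω hω
        have hle : (Mf y : ℕ∞) ≤ ((N : ℕ) + 1 : ℕ∞) := by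
          have h1 : Mf y ≤ N + 1 := le_trans (Finset.le_sup (Finset.mem_univ y)) (Nat.le_succ N)
          exact_mod_cast h1
        exact lt_of_lt_of_le hω hle
      have h1 : c + uFn (X ε) C N y ≤ 1 := by
        calc c + uFn (X ε) C N y
            ≤ (X ε).P y {ω | tau (↑C : Set S) ω < ((N : ℕ) + 1 : ℕ∞)} + uFn (X ε) C N y := by
              gcongr
              exact le_trans (hε y (Finset.mem_univ y)).le hmono
        _ ≤ 1 := hmb
      exact ENNReal.le_sub_of_add_le_left (ne_top_of_le_ne_top ENNReal.one_ne_top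
        (hcm0.le.trans hm0le1)) h1
    have step2 : ∀ z : S, uFn (X ε) C (N + 1) z ≤ 1 - c := by
      intro z
      have hrec : uFn (X ε) C (N + 1) z = ∑ w ∈ Cᶜ, (X ε).p z w * uFn (X ε) C N w := rfl
      rw [hrec]
      calc ∑ w ∈ Cᶜ, (X ε).p z w * uFn (X ε) C N w
          ≤ ∑ w ∈ Cᶜ, (X ε).p z w * (1 - c) := by
            apply Finset.sum_le_sum
            intro w hw
            by_cases hgw : Good w
            · exact mul_le_mul_right (step1 w hgw (Finset.mem_compl.mp hw)) _
            · rw [p_bad (X ε) z w hgw]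
              simp
      _ = (∑ w ∈ Cᶜ, (X ε).p z w) * (1 - c) := by rw [Finset.sum_mul]
      _ ≤ 1 * (1 - c) := by
            gcongr
            calc ∑ w ∈ Cᶜ, (X ε).p z w ≤ ∑ w, (X ε).p z w :=
                  Finset.sum_le_sum_of_subset (Finset.subset_univ _)
            _ = 1 := p_sum_one (X ε) z
      _ = 1 - c := one_mul _
    have rowA : ∀ (n : ℕ) (w : {s // s ∈ Cᶜ}),
        ∑ z, (A ^ n) w z = (uFn (X ε) C n (w : S)).toReal := rowSum_pow (X ε) C
    have hA0 : ∀ i j, 0 ≤ A i j := fun i j => ENNReal.toReal_nonneg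
    have hA1 : ∀ i, ∑ j, A i j ≤ 1 := by
      intro i
      have h := rowA 1 i
      rw [pow_one] at h
      rw [h]
      calc (uFn (X ε) C 1 (i : S)).toReal ≤ (1 : ℝ≥0∞).toReal :=
            ENNReal.toReal_mono ENNReal.one_ne_top (uFn_le_one (X ε) C 1 _)
      _ = 1 := by simp
    have hAm : ∀ i, ∑ j, (A ^ (N + 1)) i j ≤ r := by
      intro i
      rw [rowA (N + 1) i, hr]
      exact ENNReal.toReal_mono hsubtop (step2 (i : S))
    obtain ⟨hU, hcond⟩ := MatAux.matrix_bound A (N + 1) r hr0 hr1 hA0 hA1 hAm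
    refine ⟨hU, ?_⟩
    calc condNum (1 - A) ≤ 2 * (((N + 1 : ℕ) : ℝ) * (1 - r)⁻¹) := hcond
    _ = 2 * (((N + 1 : ℕ) : ℝ) * (1 - r)⁻¹) := rfl
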